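/- Fix 0 < α ≤ 1 and 0 < μ_1 < ... < μ_j, and define β^j_i := (-1)^{j-1} μ_1···μ_j e^{μ_i} / (μ_i^2 ∏_{t=1,t≠i}^{j}(μ_i - μ_t)) and ε^j_α(μ_1,...,μ_j) := (-1)^{j-1}(Σ_{i=1}^{j} β^j_i (1 - e^{-α μ_i}) - α). Then ε^j_α(μ_1,...,μ_j) = μ_1···μ_j Σ_{n=j+1}^{∞} Σ_{i_1,...,i_j ≥ 0, i_1+...+i_j = n-1-j} (1-(1-α)^n)/n! · μ_1^{i_1}···μ_j^{i_j}, and in particular ε^j_α(μ_1,...,μ_j) ≥ 0. -/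

import Mathlib

/-- `β^j_i = (-1)^{j-1} μ_1⋯μ_j e^{μ_i} / (μ_i^2 ∏_{t=1,t≠i}^{j}(μ_i - μ_t))`. -/
noncomputable def betaCoef (j : ℕ) (μ : ℕ → ℝ) (i : ℕ) : ℝ :=
  (-1 : ℝ) ^ (j - 1) * (∏ t ∈ Finset.Icc 1 j, μ t) * Real.exp (μ i) /
    (μ i ^ 2 * ∏ t ∈ (Finset.Icc 1 j).erase i, (μ i - μ t))

/-- `ε^j_α(μ_1,…,μ_j) = (-1)^{j-1}(Σ_{i=1}^j β^j_i (1 - e^{-α μ_i}) - α)`. -/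
noncomputable def epsCoef (j : ℕ) (α : ℝ) (μ : ℕ → ℝ) : ℝ :=
  (-1 : ℝ) ^ (j - 1) *
    ((∑ i ∈ Finset.Icc 1 j, betaCoef j μ i * (1 - Real.exp (-α * μ i))) - α)

open Finset

namespace EpsAux


noncomputable def cseq (α : ℝ) (n : ℕ) : ℝ := (1 - (1 - α) ^ n) / n.factorial

noncomputable def hpoly (k p : ℕ) (x : Fin k → ℝ) : ℝ :=
  ∑ c ∈ Finset.Nat.antidiagonalTuple k p, ∏ l, x l ^ c l

noncomputable def divDiff (k : ℕ) (x : Fin k → ℝ) (f : ℝ → ℝ) : ℝ :=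
  ∑ i, f (x i) / ∏ t ∈ Finset.univ.erase i, (x i - x t)

lemma hpoly_cons (k p : ℕ) (y : ℝ) (u : Fin k → ℝ) :
    hpoly (k + 1) p (Fin.cons y u) =
      ∑ ab ∈ Finset.HasAntidiagonal.antidiagonal p, y ^ ab.1 * hpoly k ab.2 u := by
  unfold hpoly
  simp only [Finset.mul_sum]
  rw [Finset.sum_sigma']
  refine Finset.sum_bij' (fun c _ => ⟨(c 0, p - c 0), Fin.tail c⟩)
    (fun ab _ => Fin.cons ab.1.1 ab.2) ?_ ?_ ?_ ?_ ?_
  · intro c hc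
    rw [Finset.Nat.mem_antidiagonalTuple, Fin.sum_univ_succ] at hc
    simp only [Finset.mem_sigma, Finset.HasAntidiagonal.mem_antidiagonal,
      Finset.Nat.mem_antidiagonalTuple, Fin.tail]
    omega
  · intro ab hab
    simp only [Finset.mem_sigma, Finset.HasAntidiagonal.mem_antidiagonal,
      Finset.Nat.mem_antidiagonalTuple] at hab
    rw [Finset.Nat.mem_antidiagonalTuple, Fin.sum_univ_succ]
    simp only [Fin.cons_zero, Fin.cons_succ]
    omega
  · intro c hc
    exact Fin.cons_self_tail c
  · intro ab hab
    simp only [Finset.mem_sigma, Finset.HasAntidiagonal.mem_antidiagonal,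
      Finset.Nat.mem_antidiagonalTuple] at hab
    obtain ⟨⟨a, b⟩, d⟩ := ab
    simp only [Fin.cons_zero]
    have hb : p - a = b := by
      simp only [Finset.HasAntidiagonal.mem_antidiagonal] at hab
      omega
    simp [Fin.tail_cons, hb]
  · intro c hc
    rw [Fin.prod_univ_succ]
    simp only [Fin.cons_zero, Fin.cons_succ]
    rfl

lemma hpoly_zero (k : ℕ) (x : Fin k → ℝ) : hpoly k 0 x = 1 := by
  unfold hpoly
  rw [Finset.Nat.antidiagonalTuple_zero_right]
  simp

lemma hpoly_succ (k p : ℕ) (w : ℝ) (u : Fin k → ℝ) :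
    hpoly (k + 1) (p + 1) (Fin.cons w u) =
      hpoly k (p + 1) u + w * hpoly (k + 1) p (Fin.cons w u) := by
  rw [hpoly_cons, hpoly_cons, Finset.Nat.sum_antidiagonal_succ]
  simp only [pow_zero, one_mul, Finset.mul_sum]
  congr 1
  refine Finset.sum_congr rfl fun ab _ => ?_
  ring

lemma hpoly_sub (k : ℕ) (y z : ℝ) (u : Fin k → ℝ) (p : ℕ) :
    (y - z) * hpoly (k + 2) p (Fin.cons y (Fin.cons z u)) =
      hpoly (k + 1) (p + 1) (Fin.cons y u) - hpoly (k + 1) (p + 1) (Fin.cons z u) := by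
  induction p with
  | zero =>
      rw [hpoly_zero, hpoly_succ, hpoly_succ, hpoly_zero, hpoly_zero]
      ring
  | succ p ih =>
      have hA : hpoly (k + 2) (p + 1) (Fin.cons y (Fin.cons z u)) =
          hpoly (k + 1) (p + 1) (Fin.cons z u) +
            y * hpoly (k + 2) p (Fin.cons y (Fin.cons z u)) := hpoly_succ _ _ _ _
      rw [hA, hpoly_succ (k) (p+1) y u, hpoly_succ (k) (p+1) z u]
      linear_combination y * ih



open Finset



lemma prod_erase_zero {k : ℕ} (g : Fin (k + 1) → ℝ) :
    ∏ t ∈ Finset.univ.erase (0 : Fin (k + 1)), g t = ∏ t : Fin k, g t.succ := by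
  rw [show Finset.univ.erase (0 : Fin (k + 1)) =
      Finset.univ.map ⟨Fin.succ, Fin.succ_injective k⟩ by
    ext t
    simp only [Finset.mem_erase, Finset.mem_univ, and_true, Finset.mem_map,
      Function.Embedding.coeFn_mk]
    constructor
    · intro ht
      obtain ⟨j, hj⟩ := Fin.exists_succ_eq.2 ht
      exact ⟨j, trivial, hj⟩
    · rintro ⟨j, -, rfl⟩
      exact Fin.succ_ne_zero j]
  rw [Finset.prod_map]
  rfl

lemma prod_erase_succ {k : ℕ} (g : Fin (k + 1) → ℝ) (s : Fin k) :
    ∏ t ∈ Finset.univ.erase s.succ, g t =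
      g 0 * ∏ t ∈ Finset.univ.erase s, g t.succ := by
  have h : Finset.univ.erase s.succ =
      insert (0 : Fin (k + 1)) ((Finset.univ.erase s).map ⟨Fin.succ, Fin.succ_injective k⟩) := by
    ext t
    simp only [Finset.mem_erase, Finset.mem_univ, and_true, Finset.mem_insert,
      Finset.mem_map, Function.Embedding.coeFn_mk]
    constructor
    · intro ht
      rcases Fin.eq_zero_or_eq_succ t with rfl | ⟨j, rfl⟩
      · exact Or.inl rfl
      · exact Or.inr ⟨j, fun hj => ht (by rw [hj]), rfl⟩
    · rintro (rfl | ⟨j, hj, rfl⟩)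
      · exact (Fin.succ_ne_zero s).symm
      · exact fun h => hj (Fin.succ_injective _ h)
  rw [h, Finset.prod_insert, Finset.prod_map]
  · rfl
  · simp only [Finset.mem_map, Function.Embedding.coeFn_mk]
    rintro ⟨j, -, hj⟩
    exact Fin.succ_ne_zero j hj






lemma divDiff_one (x : Fin 1 → ℝ) (f : ℝ → ℝ) : divDiff 1 x f = f (x 0) := by
  unfold divDiff
  rw [Fin.sum_univ_one]
  simp

lemma divDiff_cons (k : ℕ) (a : ℝ) (v : Fin k → ℝ) (f : ℝ → ℝ) :
    divDiff (k + 1) (Fin.cons a v) f =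
      f a / ∏ t, (a - v t) +
        ∑ i, f (v i) / ((v i - a) * ∏ t ∈ Finset.univ.erase i, (v i - v t)) := by
  unfold divDiff
  rw [Fin.sum_univ_succ]
  congr 1
  · rw [prod_erase_zero (fun t => (Fin.cons a v : Fin (k+1) → ℝ) 0 - (Fin.cons a v : Fin (k+1) → ℝ) t)]
    simp
  · refine Finset.sum_congr rfl fun i _ => ?_
    rw [prod_erase_succ (fun t => (Fin.cons a v : Fin (k+1) → ℝ) i.succ - (Fin.cons a v : Fin (k+1) → ℝ) t) i]
    simp

lemma divDiff_cons2 (k : ℕ) (y z : ℝ) (u : Fin k → ℝ) (f : ℝ → ℝ) :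
    divDiff (k + 2) (Fin.cons y (Fin.cons z u)) f =
      f y / ((y - z) * ∏ t, (y - u t)) +
      (f z / ((z - y) * ∏ t, (z - u t)) +
      ∑ i, f (u i) / ((u i - y) * ((u i - z) * ∏ t ∈ Finset.univ.erase i, (u i - u t)))) := by
  rw [divDiff_cons]
  congr 1
  · rw [Fin.prod_univ_succ]
    simp
  · rw [Fin.sum_univ_succ]
    congr 1
    · rw [prod_erase_zero (fun t => (Fin.cons z u : Fin (k+1) → ℝ) 0 - (Fin.cons z u : Fin (k+1) → ℝ) t)]
      simp
    · refine Finset.sum_congr rfl fun i _ => ?_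
      rw [prod_erase_succ (fun t => (Fin.cons z u : Fin (k+1) → ℝ) i.succ - (Fin.cons z u : Fin (k+1) → ℝ) t) i]
      simp [mul_comm, mul_left_comm]

private lemma key1 (a b c : ℝ) (ha : a ≠ 0) : a * (b / (a * c)) = b / c := by
  rcases eq_or_ne c 0 with rfl | hc
  · simp
  · field_simp

private lemma key2 (a b c : ℝ) (ha : a ≠ 0) : a * (b / (-a * c)) = -(b / c) := by
  have h : -a * c = a * (-c) := by ring
  rw [h, key1 _ _ _ ha, div_neg]

private lemma key3 (p q b D : ℝ) (hp : p ≠ 0) (hq : q ≠ 0) :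
    (q - p) * (b / (p * (q * D))) = b / (p * D) - b / (q * D) := by
  rcases eq_or_ne D 0 with rfl | hD
  · simp
  · field_simp

lemma divDiff_rec (k : ℕ) (y z : ℝ) (u : Fin k → ℝ) (hyz : y ≠ z)
    (hyu : ∀ t, u t ≠ y) (hzu : ∀ t, u t ≠ z) (f : ℝ → ℝ) :
    (y - z) * divDiff (k + 2) (Fin.cons y (Fin.cons z u)) f =
      divDiff (k + 1) (Fin.cons y u) f - divDiff (k + 1) (Fin.cons z u) f := by
  have hyz' : y - z ≠ 0 := sub_ne_zero.mpr hyz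
  rw [divDiff_cons2, divDiff_cons, divDiff_cons]
  rw [mul_add, mul_add, Finset.mul_sum]
  rw [key1 _ _ _ hyz']
  have hzy : z - y = -(y - z) := by ring
  rw [hzy]
  rw [show -(y - z) * ∏ t, (z - u t) = -(y - z) * ∏ t, (z - u t) from rfl]
  rw [key2 _ _ _ hyz']
  have hsum : ∑ i, (y - z) *
      (f (u i) / ((u i - y) * ((u i - z) * ∏ t ∈ Finset.univ.erase i, (u i - u t)))) =
      ∑ i, (f (u i) / ((u i - y) * ∏ t ∈ Finset.univ.erase i, (u i - u t)) -
        f (u i) / ((u i - z) * ∏ t ∈ Finset.univ.erase i, (u i - u t))) := by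
    refine Finset.sum_congr rfl fun i _ => ?_
    have h : y - z = (u i - z) - (u i - y) := by ring
    rw [h]
    exact key3 _ _ _ _ (sub_ne_zero.mpr (hyu i)) (sub_ne_zero.mpr (hzu i))
  rw [hsum, Finset.sum_sub_distrib]
  ring






lemma cons_tail2 (k : ℕ) (x : Fin (k + 2) → ℝ) :
    x = Fin.cons (x 0) (Fin.cons (x 1) (fun t : Fin k => x t.succ.succ)) := by
  funext i
  refine Fin.cases rfl (fun j => ?_) i
  refine Fin.cases rfl (fun t => rfl) j

lemma inj_aux (k : ℕ) :
    Function.Injective (Fin.cases 0 (fun t : Fin k => t.succ.succ) : Fin (k + 1) → Fin (k + 2)) := by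
  intro a b hab
  rcases Fin.eq_zero_or_eq_succ a with rfl | ⟨s, rfl⟩ <;>
    rcases Fin.eq_zero_or_eq_succ b with rfl | ⟨t, rfl⟩ <;>
    simp only [Fin.cases_zero, Fin.cases_succ] at hab
  · rfl
  · exact absurd hab.symm (Fin.succ_ne_zero _)
  · exact absurd hab (Fin.succ_ne_zero _)
  · rw [Fin.succ_injective _ (Fin.succ_injective _ hab)]

lemma cons_left_eq (k : ℕ) (x : Fin (k + 2) → ℝ) :
    (Fin.cons (x 0) (fun t : Fin k => x t.succ.succ) : Fin (k + 1) → ℝ) =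
      x ∘ (Fin.cases 0 (fun t : Fin k => t.succ.succ)) := by
  funext i
  refine Fin.cases rfl (fun t => rfl) i

lemma cons_right_eq (k : ℕ) (x : Fin (k + 2) → ℝ) :
    (Fin.cons (x 1) (fun t : Fin k => x t.succ.succ) : Fin (k + 1) → ℝ) = x ∘ Fin.succ := by
  funext i
  refine Fin.cases rfl (fun t => rfl) i

lemma divDiff_pow (k : ℕ) : ∀ (x : Fin (k + 1) → ℝ), Function.Injective x → ∀ m : ℕ,
    divDiff (k + 1) x (fun w => w ^ m) =
      if k ≤ m then hpoly (k + 1) (m - k) x else 0 := by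
  induction k with
  | zero =>
      intro x _ m
      rw [divDiff_one]
      rw [if_pos (Nat.zero_le m)]
      unfold hpoly
      rw [Nat.sub_zero, Finset.Nat.antidiagonalTuple_one, Finset.sum_singleton]
      simp
  | succ k ih =>
      intro x hinj m
      have hrep : x = Fin.cons (x 0) (Fin.cons (x 1) (fun t : Fin k => x t.succ.succ)) :=
        cons_tail2 k x
      have hyz : x 0 ≠ x 1 := fun h => by
        have h01 := hinj h
        exact absurd h01 Fin.one_pos.ne
      have hyu : ∀ t : Fin k, x t.succ.succ ≠ x 0 := fun t h =>
        Fin.succ_ne_zero _ (hinj h)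
      have hzu : ∀ t : Fin k, x t.succ.succ ≠ x 1 := fun t h => by
        have := hinj h
        exact Fin.succ_ne_zero t (Fin.succ_injective _ this)
      have injy : Function.Injective
          (Fin.cons (x 0) (fun t : Fin k => x t.succ.succ) : Fin (k + 1) → ℝ) := by
        rw [cons_left_eq]
        exact hinj.comp (inj_aux k)
      have injz : Function.Injective
          (Fin.cons (x 1) (fun t : Fin k => x t.succ.succ) : Fin (k + 1) → ℝ) := by
        rw [cons_right_eq]
        exact hinj.comp (Fin.succ_injective _)
      have hrec := divDiff_rec k (x 0) (x 1) (fun t : Fin k => x t.succ.succ)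
        hyz hyu hzu (fun w => w ^ m)
      rw [ih _ injy m, ih _ injz m] at hrec
      have hyz' : x 0 - x 1 ≠ 0 := sub_ne_zero.mpr hyz
      rw [hrep]
      refine mul_left_cancel₀ hyz' ?_
      rw [hrec]
      rcases lt_trichotomy m k with hm | rfl | hm
      · rw [if_neg (by omega), if_neg (by omega), if_neg (by omega)]
        ring
      · rw [if_pos le_rfl, if_pos le_rfl, if_neg (by omega)]
        rw [Nat.sub_self, hpoly_zero, hpoly_zero]
        ring
      · rw [if_pos (by omega), if_pos (by omega), if_pos (by omega)]
        have h1 : m - k = (m - (k + 1)) + 1 := by omega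
        rw [h1]
        exact (hpoly_sub k (x 0) (x 1) _ _).symm

lemma divDiff_inv (k : ℕ) : ∀ (x : Fin (k + 1) → ℝ), Function.Injective x →
    (∀ i, x i ≠ 0) →
    divDiff (k + 1) x (fun w => 1 / w) = (-1) ^ k / ∏ i, x i := by
  induction k with
  | zero =>
      intro x _ _
      rw [divDiff_one]
      simp
  | succ k ih =>
      intro x hinj h0
      have hrep : x = Fin.cons (x 0) (Fin.cons (x 1) (fun t : Fin k => x t.succ.succ)) :=
        cons_tail2 k x
      have hyz : x 0 ≠ x 1 := fun h => by
        have h01 := hinj h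
        exact absurd h01 Fin.one_pos.ne
      have hyu : ∀ t : Fin k, x t.succ.succ ≠ x 0 := fun t h =>
        Fin.succ_ne_zero _ (hinj h)
      have hzu : ∀ t : Fin k, x t.succ.succ ≠ x 1 := fun t h => by
        have := hinj h
        exact Fin.succ_ne_zero t (Fin.succ_injective _ this)
      have injy : Function.Injective
          (Fin.cons (x 0) (fun t : Fin k => x t.succ.succ) : Fin (k + 1) → ℝ) := by
        rw [cons_left_eq]; exact hinj.comp (inj_aux k)
      have injz : Function.Injective
          (Fin.cons (x 1) (fun t : Fin k => x t.succ.succ) : Fin (k + 1) → ℝ) := by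
        rw [cons_right_eq]; exact hinj.comp (Fin.succ_injective _)
      have h0y : ∀ i, (Fin.cons (x 0) (fun t : Fin k => x t.succ.succ) : Fin (k + 1) → ℝ) i ≠ 0 := by
        intro i
        refine Fin.cases ?_ (fun t => ?_) i
        · exact h0 0
        · exact h0 _
      have h0z : ∀ i, (Fin.cons (x 1) (fun t : Fin k => x t.succ.succ) : Fin (k + 1) → ℝ) i ≠ 0 := by
        intro i
        refine Fin.cases ?_ (fun t => ?_) i
        · exact h0 1
        · exact h0 _
      have hrec := divDiff_rec k (x 0) (x 1) (fun t : Fin k => x t.succ.succ)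
        hyz hyu hzu (fun w => 1 / w)
      rw [ih _ injy h0y, ih _ injz h0z] at hrec
      have hyz' : x 0 - x 1 ≠ 0 := sub_ne_zero.mpr hyz
      rw [hrep]
      refine mul_left_cancel₀ hyz' ?_
      rw [hrec]
      rw [Fin.prod_cons, Fin.prod_cons, Fin.prod_cons, Fin.prod_cons]
      have hQ : ∏ t : Fin k, x t.succ.succ ≠ 0 := Finset.prod_ne_zero_iff.mpr fun t _ => h0 _
      have hx0 : x 0 ≠ 0 := h0 0
      have hx1 : x 1 ≠ 0 := h0 1
      rw [pow_succ]
      field_simp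
      ring




lemma abs_cseq_le (α : ℝ) (hα : |1 - α| ≤ 1) (m : ℕ) :
    |cseq α m| ≤ 2 / m.factorial := by
  unfold cseq
  rw [abs_div, abs_of_nonneg (by positivity : (0:ℝ) ≤ (m.factorial : ℝ))]
  have h2 : |1 - (1 - α) ^ m| ≤ 2 := by
    calc |1 - (1 - α) ^ m| ≤ |1| + |(1 - α) ^ m| := abs_sub _ _
    _ ≤ 1 + 1 := by
        rw [abs_one, abs_pow]
        have := pow_le_one₀ (abs_nonneg (1 - α)) hα (n := m)
        linarith
    _ = 2 := by norm_num
  gcongr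

lemma summable_cseq (α : ℝ) (hα : |1 - α| ≤ 1) (w : ℝ) (b : ℕ) :
    Summable fun n : ℕ => cseq α (n + b) * w ^ n := by
  have hs : Summable fun n : ℕ => 2 * (|w| ^ n / n.factorial) :=
    (Real.summable_pow_div_factorial |w|).mul_left 2
  refine Summable.of_norm (Summable.of_nonneg_of_le (fun n => norm_nonneg _) (fun n => ?_) hs)
  rw [norm_mul, norm_pow, Real.norm_eq_abs, Real.norm_eq_abs]
  calc |cseq α (n + b)| * |w| ^ n ≤ (2 / (n + b).factorial) * |w| ^ n := by
        gcongr
        exact abs_cseq_le α hα (n + b)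
  _ ≤ (2 / n.factorial) * |w| ^ n := by
        gcongr
        · exact Nat.le_add_right n b
  _ = 2 * (|w| ^ n / n.factorial) := by ring

lemma exp_expand (α : ℝ) (hα : |1 - α| ≤ 1) (w : ℝ) :
    Real.exp w - Real.exp ((1 - α) * w) =
      α * w + w ^ 2 * ∑' n : ℕ, cseq α (n + 2) * w ^ n := by
  have h1 : Real.exp w = ∑' n : ℕ, w ^ n / n.factorial := by
    rw [Real.exp_eq_exp_ℝ, NormedSpace.exp_eq_tsum_div]
  have h2 : Real.exp ((1 - α) * w) = ∑' n : ℕ, ((1 - α) * w) ^ n / n.factorial := by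
    rw [Real.exp_eq_exp_ℝ, NormedSpace.exp_eq_tsum_div]
  have hs1 : Summable fun n : ℕ => w ^ n / (n.factorial : ℝ) :=
    Real.summable_pow_div_factorial w
  have hs2 : Summable fun n : ℕ => ((1 - α) * w) ^ n / (n.factorial : ℝ) :=
    Real.summable_pow_div_factorial _
  have h3 : Real.exp w - Real.exp ((1 - α) * w) = ∑' n : ℕ, cseq α n * w ^ n := by
    rw [h1, h2, ← Summable.tsum_sub hs1 hs2]
    refine tsum_congr fun n => ?_
    unfold cseq
    rw [mul_pow]
    ring
  rw [h3]
  have hsum0 : Summable fun n : ℕ => cseq α n * w ^ n := by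
    simpa using summable_cseq α hα w 0
  rw [Summable.tsum_eq_zero_add hsum0]
  have hsum1 : Summable fun n : ℕ => cseq α (n + 1) * w ^ (n + 1) := by
    refine ((summable_cseq α hα w 1).mul_right w).congr fun n => ?_
    rw [pow_succ]
    ring
  rw [Summable.tsum_eq_zero_add hsum1]
  have hc : ∀ n : ℕ, cseq α (n + 1 + 1) * w ^ (n + 1 + 1) =
      w ^ 2 * (cseq α (n + 2) * w ^ n) := fun n => by
    show cseq α (n + 2) * w ^ (n + 2) = _
    ring
  rw [tsum_congr hc, tsum_mul_left]
  have hc0 : cseq α 0 = 0 := by unfold cseq; simp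
  have hc1 : cseq α 1 = α := by unfold cseq; simp
  rw [hc0, hc1]
  ring



lemma sum_Icc_fin (k : ℕ) (f : ℕ → ℝ) :
    ∑ i ∈ Finset.Icc 1 (k + 1), f i = ∑ i : Fin (k + 1), f ((i : ℕ) + 1) := by
  refine (Finset.sum_bij' (fun (i : Fin (k + 1)) (_ : i ∈ Finset.univ) => (i : ℕ) + 1)
    (fun t ht => (⟨t - 1, by simp only [Finset.mem_Icc] at ht; omega⟩ : Fin (k + 1)))
    ?_ ?_ ?_ ?_ ?_).symm
  · intro a _
    simp only [Finset.mem_Icc]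
    have := a.isLt
    omega
  · intro t _
    exact Finset.mem_univ _
  · intro a _
    apply Fin.ext
    simp
  · intro t ht
    simp only [Finset.mem_Icc] at ht
    simp only [Fin.val_mk]
    omega
  · intro a _
    rfl

lemma prod_Icc_fin (k : ℕ) (f : ℕ → ℝ) :
    ∏ i ∈ Finset.Icc 1 (k + 1), f i = ∏ i : Fin (k + 1), f ((i : ℕ) + 1) := by
  refine (Finset.prod_bij' (fun (i : Fin (k + 1)) (_ : i ∈ Finset.univ) => (i : ℕ) + 1)
    (fun t ht => (⟨t - 1, by simp only [Finset.mem_Icc] at ht; omega⟩ : Fin (k + 1)))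
    ?_ ?_ ?_ ?_ ?_).symm
  · intro a _
    simp only [Finset.mem_Icc]
    have := a.isLt
    omega
  · intro t _
    exact Finset.mem_univ _
  · intro a _
    apply Fin.ext
    simp
  · intro t ht
    simp only [Finset.mem_Icc] at ht
    simp only [Fin.val_mk]
    omega
  · intro a _
    rfl

lemma prod_Icc_erase (k : ℕ) (μ : ℕ → ℝ) (i : Fin (k + 1)) :
    ∏ t ∈ (Finset.Icc 1 (k + 1)).erase ((i : ℕ) + 1), (μ ((i : ℕ) + 1) - μ t) =
      ∏ t ∈ Finset.univ.erase i, (μ ((i : ℕ) + 1) - μ ((t : ℕ) + 1)) := by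
  refine Finset.prod_bij'
    (fun t ht => (⟨t - 1, by
      simp only [Finset.mem_erase, Finset.mem_Icc] at ht; omega⟩ : Fin (k + 1)))
    (fun (s : Fin (k + 1)) (_ : s ∈ Finset.univ.erase i) => (s : ℕ) + 1)
    ?_ ?_ ?_ ?_ ?_
  · intro t ht
    simp only [Finset.mem_erase, Finset.mem_Icc] at ht
    simp only [Finset.mem_erase, Finset.mem_univ, and_true]
    intro h
    apply ht.1
    have : t - 1 = (i : ℕ) := congrArg Fin.val h
    omega
  · intro s hs
    simp only [Finset.mem_erase, Finset.mem_univ, and_true] at hs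
    simp only [Finset.mem_erase, Finset.mem_Icc]
    have := s.isLt
    constructor
    · intro h
      exact hs (Fin.ext (by omega))
    · omega
  · intro t ht
    simp only [Finset.mem_erase, Finset.mem_Icc] at ht
    simp only [Fin.val_mk]
    omega
  · intro s _
    apply Fin.ext
    simp
  · intro t ht
    simp only [Finset.mem_erase, Finset.mem_Icc] at ht
    have h1 : t - 1 + 1 = t := by omega
    simp only [Fin.val_mk, h1]

end EpsAux

open EpsAux

/-- Series expansion of `ε^j_α`: for `0 < α ≤ 1` and `0 < μ_1 < … < μ_j`,
`ε^j_α = μ_1⋯μ_j Σ_{n=j+1}^∞ Σ_{i_1+…+i_j=n-1-j} (1-(1-α)^n)/n! μ_1^{i_1}⋯μ_j^{i_j}`,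
and in particular `ε^j_α ≥ 0`. -/
theorem epsCoef_series (j : ℕ) (hj : 1 ≤ j) (α : ℝ) (hα0 : 0 < α) (hα1 : α ≤ 1)
    (μ : ℕ → ℝ) (hpos : ∀ i, 1 ≤ i → i ≤ j → 0 < μ i)
    (hmono : ∀ i i', 1 ≤ i → i < i' → i' ≤ j → μ i < μ i') :
    epsCoef j α μ =
      (∏ t ∈ Finset.Icc 1 j, μ t) *
        ∑' n : ℕ,
          (if j + 1 ≤ n then
            ∑ c ∈ Finset.Nat.antidiagonalTuple j (n - 1 - j),
              (1 - (1 - α) ^ n) / (n.factorial : ℝ) *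
                ∏ l : Fin j, μ ((l : ℕ) + 1) ^ c l
          else 0) ∧
    0 ≤ epsCoef j α μ := by
  obtain ⟨k, rfl⟩ : ∃ k, j = k + 1 := ⟨j - 1, by omega⟩
  clear hj
  set x : Fin (k + 1) → ℝ := fun l => μ ((l : ℕ) + 1) with hxdef
  have hα' : |1 - α| ≤ 1 := by
    rw [abs_le]; constructor <;> linarith
  have hxpos : ∀ i : Fin (k + 1), 0 < x i := fun i =>
    hpos _ (by omega) (by have := i.isLt; omega)
  have hxinj : Function.Injective x := by
    have hsm : StrictMono x := fun a b hab =>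
      hmono ((a : ℕ) + 1) ((b : ℕ) + 1) (by omega)
        (by have := Fin.lt_def.mp hab; omega) (by have := b.isLt; omega)
    exact hsm.injective
  have hd : ∀ i : Fin (k + 1), (∏ t ∈ Finset.univ.erase i, (x i - x t)) ≠ 0 := fun i =>
    Finset.prod_ne_zero_iff.mpr fun t ht =>
      sub_ne_zero.mpr fun h => (Finset.mem_erase.mp ht).1 (hxinj h).symm
  have hP : (∏ t ∈ Finset.Icc 1 (k + 1), μ t) = ∏ i : Fin (k + 1), x i :=
    prod_Icc_fin k μ
  have hP0 : (0 : ℝ) < ∏ t ∈ Finset.Icc 1 (k + 1), μ t :=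
    Finset.prod_pos fun t ht => by
      rw [Finset.mem_Icc] at ht; exact hpos t ht.1 ht.2
  have hPne : (∏ t ∈ Finset.Icc 1 (k + 1), μ t) ≠ 0 := hP0.ne'
  have hsummand : ∀ i : Fin (k + 1), Summable
      (fun n : ℕ => cseq α (n + 2) * (x i ^ n / (∏ t ∈ Finset.univ.erase i, (x i - x t)))) :=
    fun i => ((summable_cseq α hα' (x i) 2).div_const _).congr fun n =>
      (mul_div_assoc _ _ _)
  -- pointwise rewriting of the beta terms
  have hterm : ∀ i : Fin (k + 1),
      betaCoef (k + 1) μ ((i : ℕ) + 1) * (1 - Real.exp (-α * μ ((i : ℕ) + 1)))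
        = (-1 : ℝ) ^ k * (∏ t ∈ Finset.Icc 1 (k + 1), μ t) *
          (α * ((1 / x i) / (∏ t ∈ Finset.univ.erase i, (x i - x t)))
            + (∑' n : ℕ, cseq α (n + 2) *
                (x i ^ n / (∏ t ∈ Finset.univ.erase i, (x i - x t))))) := by
    intro i
    unfold betaCoef
    rw [Nat.add_sub_cancel]
    have herase := prod_Icc_erase k μ i
    rw [herase]
    have hxi : μ ((i : ℕ) + 1) = x i := rfl
    rw [hxi]
    have hdne := hd i
    have hxne : x i ≠ 0 := (hxpos i).ne'
    have hexp : Real.exp (x i) * Real.exp (-α * x i) = Real.exp ((1 - α) * x i) := by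
      rw [← Real.exp_add]; ring_nf
    have hnum : Real.exp (x i) - Real.exp ((1 - α) * x i) =
        α * x i + x i ^ 2 * ∑' n : ℕ, cseq α (n + 2) * x i ^ n := exp_expand α hα' (x i)
    have hSdiv : (∑' n : ℕ, cseq α (n + 2) *
        (x i ^ n / (∏ t ∈ Finset.univ.erase i, (x i - x t))))
        = (∑' n : ℕ, cseq α (n + 2) * x i ^ n) / (∏ t ∈ Finset.univ.erase i, (x i - x t)) := by
      rw [← tsum_div_const]
      exact tsum_congr fun n => (mul_div_assoc _ _ _).symm
    rw [hSdiv]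
    have hEE : Real.exp (x i) * (1 - Real.exp (-α * x i))
        = α * x i + x i ^ 2 * ∑' n : ℕ, cseq α (n + 2) * x i ^ n := by
      rw [mul_one_sub, hexp]; exact hnum
    set d := ∏ t ∈ Finset.univ.erase i, (x i - x t) with hddef
    set S := ∑' n : ℕ, cseq α (n + 2) * x i ^ n with hSdef
    calc (-1 : ℝ) ^ k * (∏ t ∈ Finset.Icc 1 (k + 1), μ t) * Real.exp (x i) /
          (x i ^ 2 * d) * (1 - Real.exp (-α * x i))
        = (-1 : ℝ) ^ k * (∏ t ∈ Finset.Icc 1 (k + 1), μ t) *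
            ((Real.exp (x i) * (1 - Real.exp (-α * x i))) / (x i ^ 2 * d)) := by ring
      _ = (-1 : ℝ) ^ k * (∏ t ∈ Finset.Icc 1 (k + 1), μ t) *
            ((α * x i + x i ^ 2 * S) / (x i ^ 2 * d)) := by rw [hEE]
      _ = (-1 : ℝ) ^ k * (∏ t ∈ Finset.Icc 1 (k + 1), μ t) *
            (α * ((1 / x i) / d) + S / d) := by
          congr 1
          field_simp
  -- the key identity
  have key : epsCoef (k + 1) α μ = (∏ t ∈ Finset.Icc 1 (k + 1), μ t) *
      ∑' n : ℕ, cseq α (n + 2) *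
        (if k ≤ n then hpoly (k + 1) (n - k) x else 0) := by
    unfold epsCoef
    rw [Nat.add_sub_cancel]
    rw [sum_Icc_fin k (fun m => betaCoef (k + 1) μ m * (1 - Real.exp (-α * μ m)))]
    rw [Finset.sum_congr rfl fun i _ => hterm i]
    rw [← Finset.mul_sum, Finset.sum_add_distrib]
    have hA : (∑ i : Fin (k + 1), α * ((1 / x i) / (∏ t ∈ Finset.univ.erase i, (x i - x t))))
        = α * ((-1 : ℝ) ^ k / (∏ t ∈ Finset.Icc 1 (k + 1), μ t)) := by
      rw [← Finset.mul_sum]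
      have h1 : (∑ i : Fin (k + 1), (1 / x i) / (∏ t ∈ Finset.univ.erase i, (x i - x t)))
          = divDiff (k + 1) x (fun w => 1 / w) := rfl
      rw [h1, divDiff_inv k x hxinj (fun i => (hxpos i).ne'), hP]
    have hB : (∑ i : Fin (k + 1), ∑' n : ℕ, cseq α (n + 2) *
          (x i ^ n / (∏ t ∈ Finset.univ.erase i, (x i - x t))))
        = ∑' n : ℕ, cseq α (n + 2) * (if k ≤ n then hpoly (k + 1) (n - k) x else 0) := by
      rw [← Summable.tsum_finsetSum (fun i _ => hsummand i)]
      refine tsum_congr fun n => ?_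
      rw [← Finset.mul_sum]
      congr 1
      have h1 : (∑ i : Fin (k + 1), x i ^ n / (∏ t ∈ Finset.univ.erase i, (x i - x t)))
          = divDiff (k + 1) x (fun w => w ^ n) := rfl
      rw [h1, divDiff_pow k x hxinj n]
    rw [hA, hB]
    have hsq : ((-1 : ℝ) ^ k) * ((-1 : ℝ) ^ k) = 1 := by
      rw [← pow_add]
      exact Even.neg_one_pow ⟨k, rfl⟩
    set P := ∏ t ∈ Finset.Icc 1 (k + 1), μ t
    set T := ∑' n : ℕ, cseq α (n + 2) * (if k ≤ n then hpoly (k + 1) (n - k) x else 0)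
    have h3 : (-1 : ℝ) ^ k * P * (α * ((-1 : ℝ) ^ k / P) + T)
        = α + (-1 : ℝ) ^ k * P * T := by
      calc (-1 : ℝ) ^ k * P * (α * ((-1 : ℝ) ^ k / P) + T)
          = ((-1 : ℝ) ^ k * (-1 : ℝ) ^ k) * α * (P / P) + (-1 : ℝ) ^ k * P * T := by
            ring
        _ = α + (-1 : ℝ) ^ k * P * T := by rw [hsq, div_self hPne]; ring
    rw [h3]
    calc (-1 : ℝ) ^ k * (α + (-1 : ℝ) ^ k * P * T - α)
        = ((-1 : ℝ) ^ k * (-1 : ℝ) ^ k) * (P * T) := by ring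
      _ = P * T := by rw [hsq]; ring
  refine ⟨?_, ?_⟩
  · rw [key]
    congr 1
    have hF : ∀ m : ℕ, (if k + 1 + 1 ≤ m + 2 then
          ∑ c ∈ Finset.Nat.antidiagonalTuple (k + 1) (m + 2 - 1 - (k + 1)),
            (1 - (1 - α) ^ (m + 2)) / ((m + 2).factorial : ℝ) *
              ∏ l : Fin (k + 1), μ ((l : ℕ) + 1) ^ c l
        else 0) = cseq α (m + 2) * (if k ≤ m then hpoly (k + 1) (m - k) x else 0) := by
      intro m
      by_cases hm : k ≤ m
      · rw [if_pos (by omega), if_pos hm]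
        have h2 : m + 2 - 1 - (k + 1) = m - k := by omega
        rw [h2]
        unfold hpoly
        rw [Finset.mul_sum]
        refine Finset.sum_congr rfl fun c _ => ?_
        rfl
      · rw [if_neg (by omega), if_neg hm, mul_zero]
    have hinj2 : Function.Injective (fun m : ℕ => m + 2) := fun a b h => by
      have h' : a + 2 = b + 2 := h
      omega
    have hsupp : Function.support (fun n : ℕ => if k + 1 + 1 ≤ n then
          ∑ c ∈ Finset.Nat.antidiagonalTuple (k + 1) (n - 1 - (k + 1)),
            (1 - (1 - α) ^ n) / ((n).factorial : ℝ) *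
              ∏ l : Fin (k + 1), μ ((l : ℕ) + 1) ^ c l
        else 0) ⊆ Set.range (fun m : ℕ => m + 2) := by
      intro n hn
      simp only [Function.mem_support] at hn
      by_cases h2 : k + 1 + 1 ≤ n
      · refine ⟨n - 2, ?_⟩
        show n - 2 + 2 = n
        omega
      · exact absurd (if_neg h2) hn
    calc (∑' n : ℕ, cseq α (n + 2) * (if k ≤ n then hpoly (k + 1) (n - k) x else 0))
        = ∑' m : ℕ, (if k + 1 + 1 ≤ m + 2 then
            ∑ c ∈ Finset.Nat.antidiagonalTuple (k + 1) (m + 2 - 1 - (k + 1)),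
              (1 - (1 - α) ^ (m + 2)) / ((m + 2).factorial : ℝ) *
                ∏ l : Fin (k + 1), μ ((l : ℕ) + 1) ^ c l
          else 0) := (tsum_congr fun m => (hF m).symm)
      _ = _ := hinj2.tsum_eq hsupp
  · rw [key]
    apply mul_nonneg hP0.le
    apply tsum_nonneg
    intro n
    apply mul_nonneg
    · unfold cseq
      apply div_nonneg _ (by positivity)
      have h1 : (1 - α) ^ (n + 2) ≤ 1 := pow_le_one₀ (by linarith) (by linarith)
      linarith
    · by_cases hn : k ≤ n
      · rw [if_pos hn]
        unfold hpoly
        apply Finset.sum_nonneg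
        intro c _
        apply Finset.prod_nonneg
        intro l _
        exact pow_nonneg (hxpos l).le _
      · rw [if_neg hn]
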